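/- Let K be a field, n ≥ 1, and p ∈ K^n. Then the bilinear map (b, g) ↦ u(F_p; b, g) is symmetric: for all b, g ∈ K^n and every k = 0, …, n-1 one has e_{n-1}^T (Σ_{j=k}^{n-1} b_j F_p^{j-k}) g = e_{n-1}^T (Σ_{j=k}^{n-1} g_j F_p^{j-k}) b. -/

import Mathlib

open Matrix

/-- The second companion matrix `F_p` of `p ∈ K^{n+1}`: columns `0,…,n-1` are
`e_1,…,e_n` and the last column is `p`. -/
def companion {K : Type*} [Field K] {n : ℕ} (p : Fin (n + 1) → K) :
    Matrix (Fin (n + 1)) (Fin (n + 1)) K :=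
  Matrix.of fun i j => if j = Fin.last n then p i else if (i : ℕ) = (j : ℕ) + 1 then 1 else 0

/-- The reachability (Krylov) matrix `R(A, g) = [g, Ag, …, A^{n-1} g]`. -/
def krylov {K : Type*} [Field K] {n : ℕ} (A : Matrix (Fin n) (Fin n) K) (g : Fin n → K) :
    Matrix (Fin n) (Fin n) K :=
  Matrix.of fun i j => (A ^ (j : ℕ)).mulVec g i

/-- `b(A) = Σ_{i=0}^{n-1} b_i A^i`. -/
def polyEval {K : Type*} [Field K] {n : ℕ} (b : Fin n → K) (A : Matrix (Fin n) (Fin n) K) :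
    Matrix (Fin n) (Fin n) K :=
  ∑ i : Fin n, b i • A ^ (i : ℕ)

/-- The bilinear map `u(A; b, g)` with `k`-th component
`e_{n-1}^T (Σ_{j=k}^{n-1} b_j A^{j-k}) g`. -/
def ubil {K : Type*} [Field K] {n : ℕ} (A : Matrix (Fin (n + 1)) (Fin (n + 1)) K)
    (b g : Fin (n + 1) → K) : Fin (n + 1) → K :=
  fun k => ∑ j : Fin (n + 1),
    if (k : ℕ) ≤ (j : ℕ) then b j * (A ^ ((j : ℕ) - (k : ℕ))).mulVec g (Fin.last n) else 0

lemma companion_pow_col0 {K : Type*} [Field K] {n : ℕ} (p : Fin (n + 1) → K) :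
    ∀ i : ℕ, i ≤ n → ∀ j : Fin (n + 1),
      (companion p ^ i) j ⟨0, Nat.succ_pos n⟩ = if (j : ℕ) = i then 1 else 0 := by
  intro i
  induction i with
  | zero =>
    intro _ j
    rw [pow_zero, Matrix.one_apply]
    simp only [Fin.ext_iff]
  | succ i ih =>
    intro hi j
    have hi' : i ≤ n := Nat.le_of_succ_le hi
    have hin : i < n + 1 := Nat.lt_succ_of_le hi'
    rw [pow_succ', Matrix.mul_apply]
    simp only [ih hi']
    rw [Finset.sum_eq_single (⟨i, hin⟩ : Fin (n + 1))]
    · have hne : (⟨i, hin⟩ : Fin (n + 1)) ≠ Fin.last n := by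
        simp [Fin.ext_iff]; omega
      simp [companion, hne]
    · intro l _ hl
      have : (l : ℕ) ≠ i := by
        intro h; apply hl; exact Fin.ext h
      simp [this]
    · intro h; exact absurd (Finset.mem_univ _) h

lemma companion_pow_last {K : Type*} [Field K] {n : ℕ} (p : Fin (n + 1) → K)
    (m : ℕ) (i : Fin (n + 1)) :
    (companion p ^ m) (Fin.last n) i
      = (companion p ^ (m + (i : ℕ))) (Fin.last n) ⟨0, Nat.succ_pos n⟩ := by
  rw [pow_add, Matrix.mul_apply]
  rw [Finset.sum_eq_single i]
  · rw [companion_pow_col0 p (i : ℕ) (Nat.lt_succ_iff.mp i.isLt)]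
    simp
  · intro l _ hl
    rw [companion_pow_col0 p (i : ℕ) (Nat.lt_succ_iff.mp i.isLt)]
    have : (l : ℕ) ≠ (i : ℕ) := fun h => hl (Fin.ext h)
    simp [this]
  · intro h; exact absurd (Finset.mem_univ _) h

lemma companion_pow_last_zero {K : Type*} [Field K] {n : ℕ} (p : Fin (n + 1) → K)
    (m : ℕ) (hm : m < n) :
    (companion p ^ m) (Fin.last n) ⟨0, Nat.succ_pos n⟩ = 0 := by
  rw [companion_pow_col0 p m (le_of_lt hm)]
  simp [Fin.last]
  omega


/-- The bilinear map `(b, g) ↦ u(F_p; b, g)` is symmetric. -/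
theorem ubil_companion_symm {K : Type*} [Field K] {n : ℕ} (p : Fin (n + 1) → K)
    (b g : Fin (n + 1) → K) :
    ubil (companion p) b g = ubil (companion p) g b := by
  funext k
  unfold ubil
  simp only [Matrix.mulVec, dotProduct, Finset.mul_sum, Finset.sum_ite_irrel,
    Finset.sum_const_zero, ← Finset.sum_ite]
  have step : ∀ (b g : Fin (n + 1) → K),
      (∑ x : Fin (n + 1), if (k : ℕ) ≤ (x : ℕ) then ∑ i : Fin (n + 1),
          b x * ((companion p ^ ((x : ℕ) - (k : ℕ))) (Fin.last n) i * g i) else 0)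
      = ∑ x : Fin (n + 1), ∑ i : Fin (n + 1),
          (if (k : ℕ) ≤ (x : ℕ) then
            b x * ((companion p ^ ((x : ℕ) - (k : ℕ))) (Fin.last n) i * g i) else 0) := by
    intro b g
    apply Finset.sum_congr rfl
    intro x _
    split_ifs with h
    · rfl
    · simp
  rw [step b g, step g b, Finset.sum_comm (γ := Fin (n + 1))]
  apply Finset.sum_congr rfl
  intro x _
  apply Finset.sum_congr rfl
  intro i _
  rw [companion_pow_last p ((x : ℕ) - (k : ℕ)) i, companion_pow_last p ((i : ℕ) - (k : ℕ)) x]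
  by_cases h1 : (k : ℕ) ≤ (x : ℕ) <;> by_cases h2 : (k : ℕ) ≤ (i : ℕ)
  · have hx : (x : ℕ) - (k : ℕ) + (i : ℕ) = (i : ℕ) - (k : ℕ) + (x : ℕ) := by omega
    rw [hx]
    simp only [h1, h2, if_true]
    ring
  · have hlt : (x : ℕ) - (k : ℕ) + (i : ℕ) < n := by
      have := x.isLt; omega
    rw [companion_pow_last_zero p _ hlt]
    simp [h1, h2]
  · have hlt : (i : ℕ) - (k : ℕ) + (x : ℕ) < n := by
      have := i.isLt; omega
    rw [companion_pow_last_zero p _ hlt]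
    simp [h1, h2]
  · simp [h1, h2]
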